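/- arXiv:2502.09221 — 2 statements merged into one kernel-verified Lean document; each statement's English description precedes it below -/
import Mathlib

section
/- Let Π be an EASP program and 𝒯 a nonempty collection of valuations. Then 𝒯 is a relational epistemic equilibrium model (EEM) of the translation Π* if and only if: (i) (𝒯,T) ⊨ Π^⟨𝒯,T⟩ for every T ∈ 𝒯, and (ii) for every serial multivalued subset function ρ on 𝒯 with ρ ≠ id there exist T′ ∈ 𝒯 and H′ ∈ ρ(T′) such that the indexed family of all sets H with H ∈ ρ(T) for T ∈ 𝒯, viewed as an S5-model (treated as a multiset, so K p holds iff p belongs to every member and K̂ p iff p belongs to some member), does not satisfy the reduct Π^⟨𝒯,T′⟩ at the point H′. -/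
attribute [local instance] Classical.propDecidable

namespace EASP

/-- Valuations over a countable set of atoms (atoms = ℕ). -/
abbrev Val := Set ℕ

/-- EASP literals: objective atoms `obj p`, and subjective literals `K p`, `K̂ p`. -/
inductive Lit : Type where
  | obj : ℕ → Lit
  | k : ℕ → Lit
  | khat : ℕ → Lit

/-- Body conjuncts: a literal, a `not`-negated literal, or the constants ⊤ / ⊥. -/
inductive BLit : Type where
  | pos : Lit → BLit
  | neg : Lit → BLit
  | top : BLit
  | bot : BLit

/-- An EASP rule: head is a disjunction of literals (⊥ if empty),
body is a conjunction of body conjuncts. -/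
structure Rule : Type where
  head : List Lit
  body : List BLit

/-- An EASP program: a finite collection of rules. -/
abbrev Program := List Rule

/-- Pointed S5 satisfaction of a literal, where the collection of worlds is given
as an indexed family (multiset view): `K p` iff `p` is in every member of the family,
`K̂ p` iff `p` is in some member. -/
def famSatLit {ι : Type} (W : ι → Val) (T : Val) : Lit → Prop
  | .obj p => p ∈ T
  | .k p => ∀ i, p ∈ W i
  | .khat p => ∃ i, p ∈ W i

def famSatB {ι : Type} (W : ι → Val) (T : Val) : BLit → Prop
  | .pos l => famSatLit W T l
  | .neg l => ¬ famSatLit W T l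
  | .top => True
  | .bot => False

def famSatRule {ι : Type} (W : ι → Val) (T : Val) (r : Rule) : Prop :=
  (∀ b ∈ r.body, famSatB W T b) → ∃ l ∈ r.head, famSatLit W T l

def famSatProg {ι : Type} (W : ι → Val) (T : Val) (P : Program) : Prop :=
  ∀ r ∈ P, famSatRule W T r

/-- Pointed S5 satisfaction of a literal, set-based collection of worlds. -/
def setSatLit (M : Set Val) (T : Val) : Lit → Prop
  | .obj p => p ∈ T
  | .k p => ∀ T' ∈ M, p ∈ T'
  | .khat p => ∃ T' ∈ M, p ∈ T'

def setSatB (M : Set Val) (T : Val) : BLit → Prop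
  | .pos l => setSatLit M T l
  | .neg l => ¬ setSatLit M T l
  | .top => True
  | .bot => False

def setSatRule (M : Set Val) (T : Val) (r : Rule) : Prop :=
  (∀ b ∈ r.body, setSatB M T b) → ∃ l ∈ r.head, setSatLit M T l

def setSatProg (M : Set Val) (T : Val) (P : Program) : Prop :=
  ∀ r ∈ P, setSatRule M T r

/-- Reduct of a body conjunct w.r.t. the pointed S5-model `(M, T)`:
`not λ` becomes ⊥ if `(M,T) ⊨ λ` and ⊤ otherwise; other conjuncts are unchanged. -/
noncomputable def reductB (M : Set Val) (T : Val) : BLit → BLit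
  | .pos l => .pos l
  | .neg l => if setSatLit M T l then .bot else .top
  | .top => .top
  | .bot => .bot

/-- The reduct `Π^⟨M,T⟩` of an EASP program w.r.t. the pointed S5-model `(M, T)`. -/
noncomputable def reduct (M : Set Val) (T : Val) (P : Program) : Program :=
  P.map (fun r => ⟨r.head, r.body.map (reductB M T)⟩)

/-- EHT formulas. -/
inductive Fml : Type where
  | atom : ℕ → Fml
  | bot : Fml
  | and : Fml → Fml → Fml
  | or : Fml → Fml → Fml
  | imp : Fml → Fml → Fml
  | k : Fml → Fml
  | khat : Fml → Fml

/-- EHT negation `¬φ := φ → ⊥`. -/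
def Fml.neg (φ : Fml) : Fml := .imp φ .bot

/-- EHT truth `⊤ := ¬⊥`. -/
def Fml.top : Fml := Fml.neg .bot

/-- Satisfaction in a functional EHT-model `⟨M, h⟩` at a point `T`. -/
def ehtSat (M : Set Val) : (Val → Val) → Val → Fml → Prop
  | h, T, .atom p => p ∈ h T
  | _, _, .bot => False
  | h, T, .and φ ψ => ehtSat M h T φ ∧ ehtSat M h T ψ
  | h, T, .or φ ψ => ehtSat M h T φ ∨ ehtSat M h T ψ
  | h, T, .imp φ ψ =>
      (ehtSat M h T φ → ehtSat M h T ψ) ∧ (ehtSat M id T φ → ehtSat M id T ψ)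
  | h, _, .k φ => ∀ T' ∈ M, ehtSat M h T' φ
  | h, _, .khat φ => ∃ T' ∈ M, ehtSat M h T' φ

/-- Translation of an EASP literal into an EHT formula. -/
def Lit.toFml : Lit → Fml
  | .obj p => .atom p
  | .k p => .k (.atom p)
  | .khat p => .khat (.atom p)

/-- Translation of a body conjunct into an EHT formula (`not` becomes EHT `¬`). -/
def BLit.toFml : BLit → Fml
  | .pos l => l.toFml
  | .neg l => Fml.neg l.toFml
  | .top => Fml.top
  | .bot => .bot

/-- Translation of a rule into the EHT implication body → head. -/
def Rule.toFml (r : Rule) : Fml :=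
  .imp (r.body.foldr (fun b acc => .and b.toFml acc) Fml.top)
       (r.head.foldr (fun l acc => .or l.toFml acc) .bot)

/-- The translation `Π*` of an EASP program: the conjunction of its rules. -/
def translate (P : Program) : Fml :=
  P.foldr (fun r acc => .and r.toFml acc) Fml.top

/-- Satisfaction in a relational EHT-model `M_ρ` over `M` at a point `(H, T)`.
The model `M_id` used in the implication clause corresponds to `ρ = fun X => {X}`. -/
def rehtSat (M : Set Val) : (Val → Set Val) → Val → Val → Fml → Prop
  | _, H, _, .atom p => p ∈ H
  | _, _, _, .bot => False
  | ρ, H, T, .and φ ψ => rehtSat M ρ H T φ ∧ rehtSat M ρ H T ψ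
  | ρ, H, T, .or φ ψ => rehtSat M ρ H T φ ∨ rehtSat M ρ H T ψ
  | ρ, H, T, .imp φ ψ =>
      (rehtSat M ρ H T φ → rehtSat M ρ H T ψ) ∧
      (rehtSat M (fun X => {X}) T T φ → rehtSat M (fun X => {X}) T T ψ)
  | ρ, _, _, .k φ => ∀ T' ∈ M, ∀ H' ∈ ρ T', rehtSat M ρ H' T' φ
  | ρ, _, _, .khat φ => ∃ T' ∈ M, ∃ H' ∈ ρ T', rehtSat M ρ H' T' φ

/-- `M` is a relational epistemic equilibrium model (EEM) of the EHT formula `φ`. -/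
def relEEM (M : Set Val) (φ : Fml) : Prop :=
  (∀ T ∈ M, rehtSat M (fun X => {X}) T T φ) ∧
    ∀ ρ : Val → Set Val,
      (∀ X ∈ M, (ρ X).Nonempty ∧ ∀ H ∈ ρ X, H ⊆ X) →
      (∃ X ∈ M, ρ X ≠ {X}) →
      ∃ T ∈ M, ∃ H ∈ ρ T, ¬ rehtSat M ρ H T φ

section Aux

variable {M : Set Val} {ρ : Val → Set Val}

private lemma lit_fam (H T : Val) (l : Lit) :
    rehtSat M ρ H T l.toFml ↔
      famSatLit (fun x : {q : Val × Val // q.2 ∈ M ∧ q.1 ∈ ρ q.2} => x.1.1) H l := by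
  cases l with
  | obj p => simp [Lit.toFml, rehtSat, famSatLit]
  | k p =>
    simp only [Lit.toFml, rehtSat, famSatLit]
    constructor
    · rintro h ⟨⟨H', T'⟩, hT', hH'⟩; exact h T' hT' H' hH'
    · rintro h T' hT' H' hH'; exact h ⟨(H', T'), hT', hH'⟩
  | khat p =>
    simp only [Lit.toFml, rehtSat, famSatLit]
    constructor
    · rintro ⟨T', hT', H', hH', hp⟩; exact ⟨⟨(H', T'), hT', hH'⟩, hp⟩
    · rintro ⟨⟨⟨H', T'⟩, hT', hH'⟩, hp⟩; exact ⟨T', hT', H', hH', hp⟩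

private lemma lit_id (T : Val) (l : Lit) :
    rehtSat M (fun X => {X}) T T l.toFml ↔ setSatLit M T l := by
  cases l <;> simp [Lit.toFml, rehtSat, setSatLit]

private lemma lit_pers (hρ : ∀ X ∈ M, (ρ X).Nonempty ∧ ∀ H ∈ ρ X, H ⊆ X)
    {T H : Val} (hT : T ∈ M) (hH : H ∈ ρ T) (l : Lit) :
    famSatLit (fun x : {q : Val × Val // q.2 ∈ M ∧ q.1 ∈ ρ q.2} => x.1.1) H l →
    setSatLit M T l := by
  cases l with
  | obj p => exact fun hp => (hρ T hT).2 H hH hp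
  | k p =>
    intro h T' hT'
    obtain ⟨H', hH'⟩ := (hρ T' hT').1
    exact (hρ T' hT').2 H' hH' (h ⟨(H', T'), ⟨hT', hH'⟩⟩)
  | khat p =>
    rintro ⟨⟨⟨H', T'⟩, hT', hH'⟩, hp⟩
    exact ⟨T', hT', (hρ T' hT').2 H' hH' hp⟩

private lemma b_fam (hρ : ∀ X ∈ M, (ρ X).Nonempty ∧ ∀ H ∈ ρ X, H ⊆ X)
    {T H : Val} (hT : T ∈ M) (hH : H ∈ ρ T) (b : BLit) :
    rehtSat M ρ H T b.toFml ↔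
      famSatB (fun x : {q : Val × Val // q.2 ∈ M ∧ q.1 ∈ ρ q.2} => x.1.1) H
        (reductB M T b) := by
  cases b with
  | pos l => simpa [BLit.toFml, reductB, famSatB] using lit_fam (ρ := ρ) H T l
  | neg l =>
    simp only [BLit.toFml, Fml.neg, rehtSat, reductB]
    by_cases hs : setSatLit M T l
    · simp only [if_pos hs, famSatB, iff_false, not_and]
      intro _ h2
      exact h2 ((lit_id T l).mpr hs) |>.elim
    · simp only [if_neg hs, famSatB, iff_true]
      exact ⟨fun h => hs (lit_pers hρ hT hH l ((lit_fam H T l).mp h)),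
             fun h => hs ((lit_id T l).mp h)⟩
  | top => simp [BLit.toFml, Fml.top, Fml.neg, rehtSat, reductB, famSatB]
  | bot => simp [BLit.toFml, rehtSat, reductB, famSatB]

private lemma b_id (T : Val) (b : BLit) :
    rehtSat M (fun X => {X}) T T b.toFml ↔ setSatB M T (reductB M T b) := by
  cases b with
  | pos l => simpa [BLit.toFml, reductB, setSatB] using lit_id (M := M) T l
  | neg l =>
    simp only [BLit.toFml, Fml.neg, rehtSat, reductB]
    by_cases hs : setSatLit M T l <;>
      simp [hs, lit_id, setSatB]
  | top => simp [BLit.toFml, Fml.top, Fml.neg, rehtSat, reductB, setSatB]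
  | bot => simp [BLit.toFml, rehtSat, reductB, setSatB]

private lemma head_fold (ρ' : Val → Set Val) (H T : Val) (L : List Lit) :
    rehtSat M ρ' H T (L.foldr (fun l acc => .or l.toFml acc) .bot) ↔
      ∃ l ∈ L, rehtSat M ρ' H T l.toFml := by
  induction L with
  | nil => simp [rehtSat]
  | cons a L ih => simp [rehtSat, ih]

private lemma body_fold (ρ' : Val → Set Val) (H T : Val) (L : List BLit) :
    rehtSat M ρ' H T (L.foldr (fun b acc => .and b.toFml acc) Fml.top) ↔
      ∀ b ∈ L, rehtSat M ρ' H T b.toFml := by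
  induction L with
  | nil => simp [rehtSat, Fml.top, Fml.neg]
  | cons a L ih => simp [rehtSat, ih]

private lemma rule_id (T : Val) (r : Rule) :
    rehtSat M (fun X => {X}) T T r.toFml ↔
      setSatRule M T ⟨r.head, r.body.map (reductB M T)⟩ := by
  simp only [Rule.toFml, rehtSat, and_self, setSatRule, List.mem_map,
    forall_exists_index, and_imp]
  constructor
  · intro h hb
    obtain ⟨l, hl, hsat⟩ := (head_fold _ T T r.head).mp
      (h ((body_fold _ T T r.body).mpr
        (fun b hbmem => (b_id T b).mpr (hb _ b hbmem rfl))))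
    exact ⟨l, hl, (lit_id T l).mp hsat⟩
  · intro h hb
    obtain ⟨l, hl, hsat⟩ := h (fun b' b hbmem hbeq => hbeq ▸
      (b_id T b).mp ((body_fold _ T T r.body).mp hb b hbmem))
    exact (head_fold _ T T r.head).mpr ⟨l, hl, (lit_id T l).mpr hsat⟩

private lemma rule_fam (hρ : ∀ X ∈ M, (ρ X).Nonempty ∧ ∀ H ∈ ρ X, H ⊆ X)
    {T H : Val} (hT : T ∈ M) (hH : H ∈ ρ T) (r : Rule) :
    rehtSat M ρ H T r.toFml ↔
      (famSatRule (fun x : {q : Val × Val // q.2 ∈ M ∧ q.1 ∈ ρ q.2} => x.1.1) H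
          ⟨r.head, r.body.map (reductB M T)⟩ ∧
        rehtSat M (fun X => {X}) T T r.toFml) := by
  have hid : rehtSat M (fun X => {X}) T T r.toFml ↔
      (rehtSat M (fun X => {X}) T T
          (r.body.foldr (fun b acc => .and b.toFml acc) Fml.top) →
        rehtSat M (fun X => {X}) T T
          (r.head.foldr (fun l acc => .or l.toFml acc) .bot)) := by
    simp [Rule.toFml, rehtSat]
  simp only [Rule.toFml, rehtSat, famSatRule]
  constructor
  · rintro ⟨h1, h2⟩
    refine ⟨?_, ?_, h2⟩
    · intro hb
      simp only [List.mem_map, forall_exists_index, and_imp] at hb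
      obtain ⟨l, hl, hsat⟩ := (head_fold ρ H T r.head).mp
        (h1 ((body_fold ρ H T r.body).mpr
          (fun b hbmem => (b_fam hρ hT hH b).mpr (hb _ b hbmem rfl))))
      exact ⟨l, hl, (lit_fam H T l).mp hsat⟩
    · exact h2
  · rintro ⟨hf, h2, h3⟩
    refine ⟨?_, h2⟩
    intro hb
    obtain ⟨l, hl, hsat⟩ := hf (by
      simp only [List.mem_map, forall_exists_index, and_imp]
      intro b' b hbmem hbeq
      exact hbeq ▸ (b_fam hρ hT hH b).mp ((body_fold ρ H T r.body).mp hb b hbmem))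
    exact (head_fold ρ H T r.head).mpr ⟨l, hl, (lit_fam H T l).mpr hsat⟩

private lemma trans_fold (ρ' : Val → Set Val) (H T : Val) (P : Program) :
    rehtSat M ρ' H T (translate P) ↔ ∀ r ∈ P, rehtSat M ρ' H T r.toFml := by
  induction P with
  | nil => simp [translate, rehtSat, Fml.top, Fml.neg]
  | cons a P ih =>
    have h : rehtSat M ρ' H T (translate (a :: P)) ↔
        rehtSat M ρ' H T a.toFml ∧ rehtSat M ρ' H T (translate P) := Iff.rfl
    rw [h, ih, List.forall_mem_cons]

private lemma prog_id (T : Val) (P : Program) :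
    rehtSat M (fun X => {X}) T T (translate P) ↔
      setSatProg M T (reduct M T P) := by
  rw [trans_fold]
  simp only [setSatProg, reduct, List.mem_map, forall_exists_index, and_imp]
  constructor
  · intro h r' r hr hre; exact hre ▸ (rule_id T r).mp (h r hr)
  · intro h r hr; exact (rule_id T r).mpr (h _ r hr rfl)

private lemma prog_fam (hρ : ∀ X ∈ M, (ρ X).Nonempty ∧ ∀ H ∈ ρ X, H ⊆ X)
    {T H : Val} (hT : T ∈ M) (hH : H ∈ ρ T) (P : Program) :
    rehtSat M ρ H T (translate P) ↔
      (famSatProg (fun x : {q : Val × Val // q.2 ∈ M ∧ q.1 ∈ ρ q.2} => x.1.1) H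
          (reduct M T P) ∧
        rehtSat M (fun X => {X}) T T (translate P)) := by
  rw [trans_fold, trans_fold]
  simp only [famSatProg, reduct, List.mem_map, forall_exists_index, and_imp]
  constructor
  · intro h
    constructor
    · intro r' r hr hre
      exact hre ▸ ((rule_fam hρ hT hH r).mp (h r hr)).1
    · intro r hr
      exact ((rule_fam hρ hT hH r).mp (h r hr)).2
  · rintro ⟨h1, h2⟩ r hr
    exact (rule_fam hρ hT hH r).mpr ⟨h1 _ r hr rfl, h2 r hr⟩

end Aux

/-- relational EEMs of `Π*` characterised via reducts in EASP. -/
theorem stmt5 (P : Program) (M : Set Val) (hne : M.Nonempty) :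
    relEEM M (translate P) ↔
      ((∀ T ∈ M, setSatProg M T (reduct M T P)) ∧
        ∀ ρ : Val → Set Val,
          (∀ X ∈ M, (ρ X).Nonempty ∧ ∀ H ∈ ρ X, H ⊆ X) →
          (∃ X ∈ M, ρ X ≠ {X}) →
          ∃ T' ∈ M, ∃ H' ∈ ρ T',
            ¬ famSatProg (fun x : {q : Val × Val // q.2 ∈ M ∧ q.1 ∈ ρ q.2} => x.1.1)
                H' (reduct M T' P)) := by
  constructor
  · rintro ⟨hA, hB⟩
    have hA' : ∀ T ∈ M, setSatProg M T (reduct M T P) :=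
      fun T hT => (prog_id T P).mp (hA T hT)
    refine ⟨hA', ?_⟩
    intro ρ hc hne2
    obtain ⟨T, hT, H, hH, hns⟩ := hB ρ hc hne2
    exact ⟨T, hT, H, hH, fun hf => hns ((prog_fam hc hT hH P).mpr ⟨hf, hA T hT⟩)⟩
  · rintro ⟨hA', hB'⟩
    refine ⟨fun T hT => (prog_id T P).mpr (hA' T hT), ?_⟩
    intro ρ hc hne2
    obtain ⟨T, hT, H, hH, hnf⟩ := hB' ρ hc hne2
    exact ⟨T, hT, H, hH, fun hr => hnf ((prog_fam hc hT hH P).mp hr).1⟩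


end EASP
end

section
/- For every EHT formula φ: (i) ¬K̂φ and K¬φ are EHT-equivalent, and (ii) K̂¬φ and ¬Kφ are EHT-equivalent; that is, for every functional EHT-model ⟨𝒯,h⟩ and every T ∈ 𝒯, ⟨𝒯,h⟩,T ⊨ ¬K̂φ iff ⟨𝒯,h⟩,T ⊨ K¬φ, and ⟨𝒯,h⟩,T ⊨ K̂¬φ iff ⟨𝒯,h⟩,T ⊨ ¬Kφ. -/
attribute [local instance] Classical.propDecidable

namespace EASP

lemma persistence (M : Set Val) (h : Val → Val) (hsub : ∀ T ∈ M, h T ⊆ T) :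
    ∀ φ : Fml, ∀ T ∈ M, ehtSat M h T φ → ehtSat M id T φ := by
  intro φ
  induction φ with
  | atom p => intro T hT hp; exact hsub T hT hp
  | bot => intro T hT hp; exact hp
  | and φ ψ ih1 ih2 =>
      intro T hT hp; exact ⟨ih1 T hT hp.1, ih2 T hT hp.2⟩
  | or φ ψ ih1 ih2 =>
      intro T hT hp
      rcases hp with hp | hp
      · exact Or.inl (ih1 T hT hp)
      · exact Or.inr (ih2 T hT hp)
  | imp φ ψ ih1 ih2 =>
      intro T hT hp; exact ⟨hp.2, hp.2⟩
  | k φ ih =>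
      intro T hT hp T' hT'; exact ih T' hT' (hp T' hT')
  | khat φ ih =>
      intro T hT hp
      obtain ⟨T', hT', hs⟩ := hp
      exact ⟨T', hT', ih T' hT' hs⟩

/-- ¬K̂φ ≡ K¬φ and K̂¬φ ≡ ¬Kφ in EHT. -/
theorem stmt10 (φ : Fml) (M : Set Val) (hne : M.Nonempty)
    (h : Val → Val) (hsub : ∀ T ∈ M, h T ⊆ T) (T : Val) (hT : T ∈ M) :
    (ehtSat M h T (Fml.neg (.khat φ)) ↔ ehtSat M h T (.k (Fml.neg φ))) ∧
    (ehtSat M h T (.khat (Fml.neg φ)) ↔ ehtSat M h T (Fml.neg (.k φ))) := by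
  constructor
  · constructor
    · rintro ⟨h1, h2⟩ T' hT'
      exact ⟨fun hs => h1 ⟨T', hT', hs⟩, fun hs => h2 ⟨T', hT', hs⟩⟩
    · intro hk
      refine ⟨?_, ?_⟩
      · rintro ⟨T', hT', hs⟩; exact (hk T' hT').1 hs
      · rintro ⟨T', hT', hs⟩; exact (hk T' hT').2 hs
  · constructor
    · rintro ⟨T', hT', hn1, hn2⟩
      exact ⟨fun hk => hn1 (hk T' hT'), fun hk => hn2 (hk T' hT')⟩
    · rintro ⟨h1, h2⟩
      by_contra hc
      apply h2
      intro T' hT'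
      by_contra hid
      exact hc ⟨T', hT', fun hs => hid (persistence M h hsub φ T' hT' hs), hid⟩

end EASP
end
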